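/- In the affine Hecke algebra H̃ of type Ã₂, for each k ≥ 1 one has t^{kα₁+(2k−1)α₂}s₁s₂ strongly conjugate (via conjugation by τ⁻¹s₀ and length considerations) to t^{kα₁+(2k−1)α₂}s₂s₁, hence T_{t^{kα₁+(2k−1)α₂}s₁s₂} ≡ T_{t^{kα₁+(2k−1)α₂}s₂s₁} modulo [H̃, H̃]. -/

import Mathlib

namespace A2

/-- Bundled data for the extended affine Weyl group `W̃ = P ⋊ W` of type `A₂` (for `PGL₃`),
presented as `W̃ = W_a ⋊ Ω` with simple reflections `s0, s1, s2`, length-zero element `tau`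
generating `Ω ≅ ℤ/3`, translations `t (m, n) = t^(m α₁ + n α₂)` for coroot-lattice elements,
and the Iwahori–Matsumoto length function `len`. -/
class A2Data (G : Type*) [Group G] where
  s0 : G
  s1 : G
  s2 : G
  tau : G
  t : ℤ × ℤ → G
  len : G → ℕ
  s0_sq : s0 * s0 = 1
  s1_sq : s1 * s1 = 1
  s2_sq : s2 * s2 = 1
  braid01 : (s0 * s1) ^ 3 = 1
  braid12 : (s1 * s2) ^ 3 = 1
  braid02 : (s0 * s2) ^ 3 = 1
  tau_cube : tau ^ 3 = 1
  tau_s0 : tau * s0 * tau⁻¹ = s1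
  tau_s1 : tau * s1 * tau⁻¹ = s2
  tau_s2 : tau * s2 * tau⁻¹ = s0
  t_add : ∀ a b : ℤ × ℤ, t (a + b) = t a * t b
  s1_t : ∀ m n : ℤ, s1 * t (m, n) * s1⁻¹ = t (n - m, n)
  s2_t : ∀ m n : ℤ, s2 * t (m, n) * s2⁻¹ = t (m, m - n)
  tau_t : ∀ m n : ℤ, tau * t (m, n) * tau⁻¹ = t (-n, m - n)
  s0_def : s0 = t (1, 1) * (s1 * s2 * s1)
  decomp : ∀ g : G, ∃ (m n : ℤ) (w : G) (j : Fin 3),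
    w ∈ ({1, s1, s2, s1 * s2, s2 * s1, s1 * s2 * s1} : Set G) ∧
    g = t (m, n) * w * tau ^ (j : ℕ)
  len_t : ∀ m n : ℤ,
    len (t (m, n)) = (2*m - n).natAbs + (2*n - m).natAbs + (m + n).natAbs
  len_t_s1 : ∀ m n : ℤ,
    len (t (m, n) * s1) = (2*m - n - 1).natAbs + (2*n - m).natAbs + (m + n).natAbs
  len_t_s2 : ∀ m n : ℤ,
    len (t (m, n) * s2) = (2*m - n).natAbs + (2*n - m - 1).natAbs + (m + n).natAbs
  len_t_s1s2 : ∀ m n : ℤ,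
    len (t (m, n) * (s1 * s2)) =
      (2*m - n - 1).natAbs + (2*n - m).natAbs + (m + n - 1).natAbs
  len_t_s2s1 : ∀ m n : ℤ,
    len (t (m, n) * (s2 * s1)) =
      (2*m - n).natAbs + (2*n - m - 1).natAbs + (m + n - 1).natAbs
  len_t_s1s2s1 : ∀ m n : ℤ,
    len (t (m, n) * (s1 * s2 * s1)) =
      (2*m - n - 1).natAbs + (2*n - m - 1).natAbs + (m + n - 1).natAbs
  len_mul_tau : ∀ g : G, len (g * tau) = len g
  len_tau_mul : ∀ g : G, len (tau * g) = len g

namespace A2Data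

variable {G : Type*} [Group G] [A2Data G]

/-- The affine Weyl group `W_a`, the subgroup generated by the simple reflections. -/
def Wa (G : Type*) [Group G] [A2Data G] : Subgroup G :=
  Subgroup.closure {s0, s1, s2}

/-- `y` is `W̃`-conjugate to `x`. -/
def ConjTo (x y : G) : Prop := ∃ g : G, g * x * g⁻¹ = y

/-- The `W̃`-conjugacy class of `x`. -/
def conjClass (x : G) : Set G := {y | ConjTo x y}

def IsConjClass (S : Set G) : Prop := ∃ x : G, S = conjClass x

/-- `n` is the minimal length of an element of `S`, attained on `S`. -/
def IsMinLen (S : Set G) (n : ℕ) : Prop :=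
  (∃ x ∈ S, len x = n) ∧ ∀ x ∈ S, n ≤ len x

/-- The set of simple affine reflections. -/
def simples (G : Type*) [Group G] [A2Data G] : Set G := {s0, s1, s2}

/-- The class `𝕆₁ = {t^{kα₁}s₁, t^{kα₂}s₂, t^{k(α₁+α₂)}s₁s₂s₁ : k ∈ ℤ}`. -/
def O1set (G : Type*) [Group G] [A2Data G] : Set G :=
  {x | ∃ k : ℤ, x = t (k, 0) * s1 ∨ x = t (0, k) * s2 ∨ x = t (k, k) * (s1 * s2 * s1)}

/-- The class `𝕆₂ = {t^λ s₁s₂, t^λ s₂s₁ : λ ∈ Q}`. -/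
def O2set (G : Type*) [Group G] [A2Data G] : Set G :=
  {x | ∃ m n : ℤ, x = t (m, n) * (s1 * s2) ∨ x = t (m, n) * (s2 * s1)}

/-- `C_i = {t^{kα₁+iα₂}s₁, t^{-iα₁+kα₂}s₂, t^{kα₁+(k-i)α₂}s₁s₂s₁ : k ∈ ℤ}`. -/
def Ciset (G : Type*) [Group G] [A2Data G] (i : ℤ) : Set G :=
  {x | ∃ k : ℤ, x = t (k, i) * s1 ∨ x = t (-i, k) * s2 ∨ x = t (k, k - i) * (s1 * s2 * s1)}

/-- `C'_i = {t^{kα₁-iα₂}s₁, t^{iα₁+kα₂}s₂, t^{(k-i)α₁+kα₂}s₁s₂s₁ : k ∈ ℤ}`. -/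
def Ci'set (G : Type*) [Group G] [A2Data G] (i : ℤ) : Set G :=
  {x | ∃ k : ℤ, x = t (k, -i) * s1 ∨ x = t (i, k) * s2 ∨ x = t (k - i, k) * (s1 * s2 * s1)}

/-- `𝕆_{id,τ} = {t^{mα₁+nα₂}τ, t^{mα₁+nα₂}s₁s₂τ : m, n ∈ ℤ}`. -/
def OIdtau (G : Type*) [Group G] [A2Data G] : Set G :=
  {x | ∃ m n : ℤ, x = t (m, n) * tau ∨ x = t (m, n) * (s1 * s2) * tau}

/-- `𝕆_{i,τ} = {t^{kα₁+iα₂}s₁s₂s₁τ, t^{(k+i-1)α₁+kα₂}s₂τ, t^{(1-i)α₁+kα₂}s₁τ : k ∈ ℤ}`. -/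
def Oitau (G : Type*) [Group G] [A2Data G] (i : ℤ) : Set G :=
  {x | ∃ k : ℤ, x = t (k, i) * (s1 * s2 * s1) * tau ∨ x = t (k + i - 1, k) * s2 * tau ∨
    x = t (1 - i, k) * s1 * tau}

/-- One non-length-increasing conjugation step by a simple reflection. -/
def StepTo (x y : G) : Prop :=
  ∃ s ∈ simples G, y = s * x * s ∧ len y ≤ len x

def RedTo : G → G → Prop := Relation.ReflTransGen StepTo

/-- The relation `≈` of the He–Nie reduction method. -/
def Approx (x y : G) : Prop := RedTo x y ∧ RedTo y x

/-- `f` satisfies the defining reduction recursion for the class polynomials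
`f_{w̃,𝕆}`, written as polynomials in the variable `X = v - v⁻¹`. -/
def ClassPolySystem (f : G → Set G → Polynomial ℤ) : Prop :=
  (∀ x : G, (∀ y : G, ConjTo x y → len x ≤ len y) →
    ∀ O : Set G, IsConjClass O → (x ∈ O → f x O = 1) ∧ (x ∉ O → f x O = 0)) ∧
  (∀ x x1 s : G, (∃ y : G, ConjTo x y ∧ len y < len x) →
    Approx x x1 → s ∈ simples G → len (s * x1 * s) < len x1 → len x1 = len x →
    ∀ O : Set G, f x O = Polynomial.X * f (s * x1) O + f (s * x1 * s) O)

/-- `y` is `δ`-conjugate to `x`. -/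
def DConjTo (δ : G ≃* G) (x y : G) : Prop := ∃ g : G, g * x * (δ g)⁻¹ = y

def dConjClass (δ : G ≃* G) (x : G) : Set G := {y | DConjTo δ x y}

def IsDConjClass (δ : G ≃* G) (S : Set G) : Prop := ∃ x : G, S = dConjClass δ x

def DStepTo (δ : G ≃* G) (x y : G) : Prop :=
  ∃ s ∈ simples G, y = s * x * (δ s)⁻¹ ∧ len y ≤ len x

def DRedTo (δ : G ≃* G) : G → G → Prop := Relation.ReflTransGen (DStepTo δ)

def DApprox (δ : G ≃* G) (x y : G) : Prop := DRedTo δ x y ∧ DRedTo δ y x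

/-- `f` satisfies the `δ`-twisted reduction recursion for the class polynomials
`f_{w̃,𝕆}`, written as polynomials in `X = v - v⁻¹`. -/
def DClassPolySystem (δ : G ≃* G) (f : G → Set G → Polynomial ℤ) : Prop :=
  (∀ x : G, (∀ y : G, DConjTo δ x y → len x ≤ len y) →
    ∀ O : Set G, IsDConjClass δ O → (x ∈ O → f x O = 1) ∧ (x ∉ O → f x O = 0)) ∧
  (∀ x x1 s : G, (∃ y : G, DConjTo δ x y ∧ len y < len x) →
    DApprox δ x x1 → s ∈ simples G → len (s * x1 * (δ s)⁻¹) < len x1 → len x1 = len x →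
    ∀ O : Set G, f x O = Polynomial.X * f (s * x1) O + f (s * x1 * (δ s)⁻¹) O)

/-- The diagram automorphism `δ` of `W̃` of type `A₂`: it fixes `s0`, swaps `s1` and
`s2`, inverts `tau`, swaps the coroot coordinates, and preserves lengths. -/
def IsDiagramAut (δ : G ≃* G) : Prop :=
  δ s0 = s0 ∧ δ s1 = s2 ∧ δ s2 = s1 ∧ δ tau = tau⁻¹ ∧
  (∀ m n : ℤ, δ (t (m, n)) = t (n, m)) ∧ ∀ g : G, len (δ g) = len g

/-- Elementary strong conjugation. -/
def ElemStrongConj (x y : G) : Prop :=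
  len x = len y ∧ ∃ g : G, y = g * x * g⁻¹ ∧
    (len (g * x) = len g + len x ∨ len (x * g⁻¹) = len g + len x)

/-- Strong conjugation: a chain of elementary strong conjugations. -/
def StrongConj : G → G → Prop := Relation.ReflTransGen ElemStrongConj

end A2Data

open A2Data

/-- The affine Hecke algebra attached to `W̃`, over `A = ℤ[v, v⁻¹]`, with standard
basis `T` and the quadratic and braid-type multiplication relations. -/
class HeckeData (G : Type*) [Group G] [A2Data G] (H : Type*) [Ring H]
    [Algebra (LaurentPolynomial ℤ) H] where
  T : G → H
  T_one : T 1 = 1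
  T_mul : ∀ x y : G, len (x * y) = len x + len y → T x * T y = T (x * y)
  T_quad : ∀ s ∈ simples G,
    (T s - algebraMap (LaurentPolynomial ℤ) H (LaurentPolynomial.T 1)) *
      (T s + algebraMap (LaurentPolynomial ℤ) H (LaurentPolynomial.T (-1))) = 0

/-- The commutator `ℤ[v,v⁻¹]`-submodule `[H̃, H̃]`. -/
noncomputable def commSub (H : Type*) [Ring H] [Algebra (LaurentPolynomial ℤ) H] :
    Submodule (LaurentPolynomial ℤ) H :=
  Submodule.span (LaurentPolynomial ℤ) {z : H | ∃ a b : H, z = a * b - b * a}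

/-- The `δ`-twisted commutator `ℤ[v,v⁻¹]`-submodule `[H̃, H̃]_δ`. -/
noncomputable def dCommSub {H : Type*} [Ring H] [Algebra (LaurentPolynomial ℤ) H]
    (δH : H →ₐ[LaurentPolynomial ℤ] H) : Submodule (LaurentPolynomial ℤ) H :=
  Submodule.span (LaurentPolynomial ℤ) {z : H | ∃ a b : H, z = a * b - b * (δH a)}

end A2

namespace A2
namespace A2Data

variable {G : Type*} [Group G] [A2Data G]

lemma tt (a b : ℤ × ℤ) (c : G) : t a * (t b * c) = t (a + b) * c := by
  rw [t_add, mul_assoc]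

lemma tt' (a b : ℤ × ℤ) : (t a * t b : G) = t (a + b) := (t_add a b).symm

lemma s1t (m n : ℤ) : (s1 * t (m, n) : G) = t (n - m, n) * s1 := by
  have h := s1_t (G := G) m n
  calc (s1 * t (m, n) : G) = (s1 * t (m, n) * s1⁻¹) * s1 := by group
    _ = _ := by rw [h]

lemma s1tc (m n : ℤ) (c : G) : s1 * (t (m, n) * c) = t (n - m, n) * (s1 * c) := by
  rw [← mul_assoc, s1t, mul_assoc]

lemma s2t (m n : ℤ) : (s2 * t (m, n) : G) = t (m, m - n) * s2 := by
  have h := s2_t (G := G) m n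
  calc (s2 * t (m, n) : G) = (s2 * t (m, n) * s2⁻¹) * s2 := by group
    _ = _ := by rw [h]

lemma s2tc (m n : ℤ) (c : G) : s2 * (t (m, n) * c) = t (m, m - n) * (s2 * c) := by
  rw [← mul_assoc, s2t, mul_assoc]

lemma taut (m n : ℤ) : (tau * t (m, n) : G) = t (-n, m - n) * tau := by
  have h := tau_t (G := G) m n
  calc (tau * t (m, n) : G) = (tau * t (m, n) * tau⁻¹) * tau := by group
    _ = _ := by rw [h]

lemma tautc (m n : ℤ) (c : G) : tau * (t (m, n) * c) = t (-n, m - n) * (tau * c) := by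
  rw [← mul_assoc, taut, mul_assoc]

lemma taus1 : (tau * s1 : G) = s2 * tau := by
  have h := tau_s1 (G := G)
  calc (tau * s1 : G) = (tau * s1 * tau⁻¹) * tau := by group
    _ = _ := by rw [h]

lemma taus1c (c : G) : tau * (s1 * c) = s2 * (tau * c) := by
  rw [← mul_assoc, taus1, mul_assoc]

lemma taus2 : (tau * s2 : G) = s0 * tau := by
  have h := tau_s2 (G := G)
  calc (tau * s2 : G) = (tau * s2 * tau⁻¹) * tau := by group
    _ = _ := by rw [h]

lemma taus2c (c : G) : tau * (s2 * c) = s0 * (tau * c) := by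
  rw [← mul_assoc, taus2, mul_assoc]

lemma s1c (c : G) : (s1 : G) * (s1 * c) = c := by
  rw [← mul_assoc, s1_sq, one_mul]

lemma s2c (c : G) : (s2 : G) * (s2 * c) = c := by
  rw [← mul_assoc, s2_sq, one_mul]

lemma s2_inv : (s2 : G)⁻¹ = s2 := inv_eq_of_mul_eq_one_left s2_sq

lemma s0_inv : (s0 : G)⁻¹ = s0 := inv_eq_of_mul_eq_one_left s0_sq

lemma braid_aux : (s1 * (s2 * (s1 * (s2 * s1))) : G) = s2 := by
  have h : ((s1 * s2) ^ 3 : G) = 1 := braid12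
  have h2 : (s1 * (s2 * (s1 * (s2 * s1))) : G) * s2 = 1 := by rw [← h, pow_three']; simp [mul_assoc]
  exact mul_right_cancel (h2.trans s2_sq.symm)

lemma braid_auxc (c : G) : s1 * (s2 * (s1 * (s2 * (s1 * c)))) = s2 * c := by
  calc s1 * (s2 * (s1 * (s2 * (s1 * c)))) = (s1 * (s2 * (s1 * (s2 * s1)))) * c := by
        simp only [mul_assoc]
    _ = s2 * c := by rw [braid_aux]

lemma key1 (k : ℤ) :
    (t (k, 2*k - 1) * (s1 * s2) : G) * (s0 * tau) = t (k - 1, 2*k - 1) * s2 * tau := by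
  simp only [s0_def, mul_assoc, tt, tt', s1tc, s1t, s2tc, s2t, tautc, taut, taus1c, taus1,
    taus2c, taus2, s1c, s2c, braid_auxc, braid_aux, Prod.mk_add_mk, one_mul, mul_one]
  congr 2
  rw [Prod.mk.injEq]
  constructor <;> ring

lemma key2 (k : ℤ) :
    ((s0 * tau) : G) * (t (k, 2*k - 1) * (s2 * s1)) = t (k - 1, 2*k - 1) * s2 * tau := by
  simp only [s0_def, mul_assoc, tt, tt', s1tc, s1t, s2tc, s2t, tautc, taut, taus1c, taus1,
    taus2c, taus2, s1c, s2c, braid_auxc, braid_aux, Prod.mk_add_mk, one_mul, mul_one]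
  congr 2
  rw [Prod.mk.injEq]
  constructor <;> ring

lemma t_zero : (t (0, 0) : G) = 1 := by
  have h := t_add (G := G) (0, 0) (0, 0)
  have h0 : ((0, 0) : ℤ × ℤ) + (0, 0) = (0, 0) := by simp
  rw [h0] at h
  have h1 : (t (0, 0) : G) * 1 = t (0, 0) * t (0, 0) := by rw [mul_one]; exact h
  exact (mul_left_cancel h1).symm

lemma len_one : len (1 : G) = 0 := by
  rw [← t_zero, len_t]; simp

lemma len_tau : len (tau : G) = 0 := by
  have h := len_mul_tau (G := G) 1
  rwa [one_mul, len_one] at h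

lemma len_tautau : len (tau * tau : G) = 0 := by
  rw [len_tau_mul, len_tau]

lemma len_s0 : len (s0 : G) = 1 := by
  rw [s0_def, len_t_s1s2s1]; decide

end A2Data
end A2

open A2 A2Data in
/-- For `k ≥ 1`, `t^{kα₁+(2k-1)α₂}s₁s₂` is strongly conjugate to
`t^{kα₁+(2k-1)α₂}s₂s₁`, hence `T_{t^{kα₁+(2k-1)α₂}s₁s₂} ≡ T_{t^{kα₁+(2k-1)α₂}s₂s₁}`
modulo `[H̃, H̃]`. -/
theorem statement_11 {G : Type*} [Group G] [A2Data G]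
    {H : Type*} [Ring H] [Algebra (LaurentPolynomial ℤ) H] [HeckeData G H]
    (k : ℤ) (hk : 1 ≤ k) :
    StrongConj (t (k, 2*k - 1) * (s1 * s2) : G) (t (k, 2*k - 1) * (s2 * s1)) ∧
    (HeckeData.T (t (k, 2*k - 1) * (s1 * s2) : G) : H) -
      HeckeData.T (t (k, 2*k - 1) * (s2 * s1) : G) ∈ commSub H := by
  have hlx := len_t_s1s2 (G := G) k (2*k - 1)
  have hly := len_t_s2s1 (G := G) k (2*k - 1)
  have hlu := len_t_s2 (G := G) (k - 1) (2*k - 1)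
  have hlen_eq : len (t (k, 2*k - 1) * (s1 * s2) : G) = len (t (k, 2*k - 1) * (s2 * s1) : G) := by
    rw [hlx, hly]; omega
  have hlg : len ((s0 * tau : G))⁻¹ = 1 := by
    rw [mul_inv_rev, s0_inv]
    have h := len_tau_mul (G := G) (tau⁻¹ * s0)
    have h2 : tau * (tau⁻¹ * s0) = (s0 : G) := by group
    rw [h2] at h
    rw [← h, len_s0]
  have hlxg : len ((t (k, 2*k - 1) * (s1 * s2) : G) * (s0 * tau)) =
      len ((s0 * tau : G))⁻¹ + len (t (k, 2*k - 1) * (s1 * s2) : G) := by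
    rw [key1 k, len_mul_tau, hlu, hlg, hlx]; omega
  have hxy : (t (k, 2*k - 1) * (s1 * s2) : G) * (s0 * tau) =
      (s0 * tau) * (t (k, 2*k - 1) * (s2 * s1)) := (key1 k).trans (key2 k).symm
  refine ⟨Relation.ReflTransGen.single ⟨hlen_eq, (s0 * tau)⁻¹, ?_, Or.inr ?_⟩, ?_⟩
  · calc (t (k, 2*k - 1) * (s2 * s1) : G)
        = (s0 * tau)⁻¹ * ((s0 * tau) * (t (k, 2*k - 1) * (s2 * s1))) := by group
      _ = (s0 * tau)⁻¹ * ((t (k, 2*k - 1) * (s1 * s2)) * (s0 * tau)) := by rw [hxy]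
      _ = (s0 * tau)⁻¹ * (t (k, 2*k - 1) * (s1 * s2)) * ((s0 * tau)⁻¹)⁻¹ := by group
  · rw [inv_inv]; exact hlxg
  -- Hecke algebra part
  · have hτ3 : (tau * (tau * tau) : G) = 1 := by
      have h := tau_cube (G := G); rwa [pow_three] at h
    have hτ3' : ((tau * tau) * tau : G) = 1 := by
      have h := tau_cube (G := G); rwa [pow_three'] at h
    have hTt1 : (HeckeData.T (G := G) (H := H) tau) * HeckeData.T (G := G) (H := H) (tau * tau)
        = 1 := by
      rw [HeckeData.T_mul (G := G) (H := H) tau (tau * tau)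
        (by rw [hτ3, len_one, len_tau, len_tautau]), hτ3, HeckeData.T_one]
    have hTt2 : (HeckeData.T (G := G) (H := H) (tau * tau)) * HeckeData.T (G := G) (H := H) tau
        = 1 := by
      rw [HeckeData.T_mul (G := G) (H := H) (tau * tau) tau
        (by rw [hτ3', len_one, len_tau, len_tautau]), hτ3', HeckeData.T_one]
    have hs0mem : (s0 : G) ∈ simples G := Set.mem_insert _ _
    have hq := HeckeData.T_quad (G := G) (H := H) s0 hs0mem
    set a : H := algebraMap (LaurentPolynomial ℤ) H (LaurentPolynomial.T 1) with ha_def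
    set b : H := algebraMap (LaurentPolynomial ℤ) H (LaurentPolynomial.T (-1)) with hb_def
    set Ts0 : H := HeckeData.T (G := G) (H := H) s0 with hTs0_def
    have hab : a * b = 1 := by
      rw [ha_def, hb_def, ← map_mul, ← LaurentPolynomial.T_add]
      norm_num
    have ha : ∀ z : H, a * z = z * a := fun z => Algebra.commutes _ z
    have hb : ∀ z : H, b * z = z * b := fun z => Algebra.commutes _ z
    have e : Ts0 * Ts0 + Ts0 * b - a * Ts0 - a * b = 0 := by
      rw [← hq]; noncomm_ring
    have h1 : Ts0 * (Ts0 + (b - a)) = 1 := by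
      have e1 := e
      rw [ha Ts0, hab] at e1
      calc Ts0 * (Ts0 + (b - a)) = Ts0 * Ts0 + Ts0 * b - Ts0 * a := by noncomm_ring
        _ = 1 := sub_eq_zero.mp e1
    have h2 : (Ts0 + (b - a)) * Ts0 = 1 := by
      have e2 := e
      rw [hab] at e2
      calc (Ts0 + (b - a)) * Ts0 = Ts0 * Ts0 + b * Ts0 - a * Ts0 := by noncomm_ring
        _ = Ts0 * Ts0 + Ts0 * b - a * Ts0 := by rw [hb Ts0]
        _ = 1 := sub_eq_zero.mp e2
    have hsplit : (HeckeData.T (G := G) (H := H) (s0 * tau)) =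
        Ts0 * HeckeData.T (G := G) (H := H) tau := by
      rw [hTs0_def, HeckeData.T_mul (G := G) (H := H) s0 tau
        (by rw [len_mul_tau, len_tau]; omega)]
    set c : H := HeckeData.T (G := G) (H := H) (tau * tau) * (Ts0 + (b - a)) with hc_def
    have hhc : HeckeData.T (G := G) (H := H) (s0 * tau) * c = 1 := by
      rw [hsplit, hc_def, mul_assoc, ← mul_assoc (HeckeData.T (G := G) (H := H) tau),
        hTt1, one_mul, h1]
    have hch : c * HeckeData.T (G := G) (H := H) (s0 * tau) = 1 := by
      rw [hsplit, hc_def, mul_assoc, ← mul_assoc (Ts0 + (b - a)), h2, one_mul, hTt2]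
    have hE1 : HeckeData.T (G := G) (H := H) (t (k, 2*k - 1) * (s1 * s2)) *
        HeckeData.T (G := G) (H := H) (s0 * tau) =
        HeckeData.T (G := G) (H := H) (t (k - 1, 2*k - 1) * s2 * tau) := by
      rw [HeckeData.T_mul (G := G) (H := H) _ _
        (by rw [key1 k, len_mul_tau, hlu, hlx, len_mul_tau, len_s0]; omega), key1 k]
    have hE2 : HeckeData.T (G := G) (H := H) (s0 * tau) *
        HeckeData.T (G := G) (H := H) (t (k, 2*k - 1) * (s2 * s1)) =
        HeckeData.T (G := G) (H := H) (t (k - 1, 2*k - 1) * s2 * tau) := by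
      rw [HeckeData.T_mul (G := G) (H := H) _ _
        (by rw [key2 k, len_mul_tau, hlu, hly, len_mul_tau, len_s0]; omega), key2 k]
    set Tw : H := HeckeData.T (G := G) (H := H) (t (k - 1, 2*k - 1) * s2 * tau) with hTw_def
    have hTx : HeckeData.T (G := G) (H := H) (t (k, 2*k - 1) * (s1 * s2)) = Tw * c := by
      calc HeckeData.T (G := G) (H := H) (t (k, 2*k - 1) * (s1 * s2))
          = HeckeData.T (G := G) (H := H) (t (k, 2*k - 1) * (s1 * s2)) *
            (HeckeData.T (G := G) (H := H) (s0 * tau) * c) := by rw [hhc, mul_one]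
        _ = (HeckeData.T (G := G) (H := H) (t (k, 2*k - 1) * (s1 * s2)) *
            HeckeData.T (G := G) (H := H) (s0 * tau)) * c := by rw [mul_assoc]
        _ = Tw * c := by rw [hE1]
    have hTy : HeckeData.T (G := G) (H := H) (t (k, 2*k - 1) * (s2 * s1)) = c * Tw := by
      calc HeckeData.T (G := G) (H := H) (t (k, 2*k - 1) * (s2 * s1))
          = (c * HeckeData.T (G := G) (H := H) (s0 * tau)) *
            HeckeData.T (G := G) (H := H) (t (k, 2*k - 1) * (s2 * s1)) := by rw [hch, one_mul]
        _ = c * (HeckeData.T (G := G) (H := H) (s0 * tau) *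
            HeckeData.T (G := G) (H := H) (t (k, 2*k - 1) * (s2 * s1))) := by rw [mul_assoc]
        _ = c * Tw := by rw [hE2]
    exact Submodule.subset_span ⟨Tw, c, by rw [hTx, hTy]⟩
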